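/- Let G be a simple graph on n vertices with δ(G) ≥ n/2 + 1. Then the edge scramble E(G), whose eggs are the two-element vertex sets of the edges of G, has order exactly n − α(G), where α(G) is the independence number of G. -/

import Mathlib

open SimpleGraph Finset

attribute [local instance] Classical.propDecidable

variable {V : Type*}

/-- The number of edges of `G` between `A` and its complement
(counted as ordered pairs going from `A` to `Aᶜ`, so each crossing edge counts once). -/
noncomputable def crossingEdges [Fintype V] (G : SimpleGraph V) (A : Finset V) : ℕ :=
  (Finset.univ.filter (fun p : V × V => p.1 ∈ A ∧ p.2 ∉ A ∧ G.Adj p.1 p.2)).card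

/-- A scramble on `G`: a nonempty collection of nonempty connected vertex subsets (eggs). -/
def IsScramble (G : SimpleGraph V) (S : Finset (Finset V)) : Prop :=
  S.Nonempty ∧ ∀ E ∈ S, E.Nonempty ∧ (G.induce (E : Set V)).Connected

/-- The minimum size of a hitting set for the eggs of `S`. -/
noncomputable def hitNum (S : Finset (Finset V)) : ℕ :=
  sInf {k | ∃ C : Finset V, (∀ E ∈ S, (E ∩ C).Nonempty) ∧ C.card = k}

/-- The minimum size of an egg-cut of `S`, as an extended natural number
(`⊤` if no egg-cut exists). -/
noncomputable def cutNum [Fintype V] (G : SimpleGraph V) (S : Finset (Finset V)) : ℕ∞ :=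
  sInf {k : ℕ∞ | ∃ A : Finset V, (∃ E ∈ S, E ⊆ A) ∧ (∃ E ∈ S, E ⊆ Aᶜ) ∧
    k = (crossingEdges G A : ℕ∞)}

/-- The order of a scramble: the minimum of the smallest hitting set size and the
smallest egg-cut size. -/
noncomputable def scrambleOrder [Fintype V] (G : SimpleGraph V) (S : Finset (Finset V)) : ℕ :=
  (min (hitNum S : ℕ∞) (cutNum G S)).toNat

/-- The scramble number of `G`: the maximum order of a scramble on `G`. -/
noncomputable def scrambleNumber [Fintype V] (G : SimpleGraph V) : ℕ :=
  sSup {k | ∃ S : Finset (Finset V), IsScramble G S ∧ k = scrambleOrder G S}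

/-- The edge-connectivity of `G`: the minimum number of edges whose removal
disconnects `G` (0 if `G` is disconnected). -/
noncomputable def edgeConnectivity [Fintype V] (G : SimpleGraph V) : ℕ :=
  sInf {k | ∃ D : Finset (Sym2 V), ↑D ⊆ G.edgeSet ∧ D.card = k ∧
    ¬ (G.deleteEdges ↑D).Connected}

/-- The vertex-connectivity of `G`: the minimum size of a set of vertices whose removal
disconnects the graph or leaves a single vertex. -/
noncomputable def vertexConnectivity [Fintype V] (G : SimpleGraph V) : ℕ :=
  sInf {k | ∃ S : Finset V, S ≠ Finset.univ ∧ S.card = k ∧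
    (¬ (G.induce ((↑S)ᶜ : Set V)).Connected ∨ (Sᶜ : Finset V).card = 1)}

/-- The Laplacian of a function `f : V → ℤ` at a vertex `v`: the net number of chips
lost at `v` when each vertex `u` is fired `f u` times. -/
noncomputable def lapAt [Fintype V] (G : SimpleGraph V) (f : V → ℤ) (v : V) : ℤ :=
  ∑ u ∈ G.neighborFinset v, (f v - f u)

/-- Two divisors are equivalent when they differ by a sequence of chip-firing moves. -/
def LinEquiv [Fintype V] (G : SimpleGraph V) (D D' : V → ℤ) : Prop :=
  ∃ f : V → ℤ, ∀ v, D v - D' v = lapAt G f v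

/-- A divisor is effective when it is nonnegative everywhere. -/
def Effective (D : V → ℤ) : Prop := ∀ v, 0 ≤ D v

/-- The degree of a divisor: the total number of chips. -/
noncomputable def degDiv [Fintype V] (D : V → ℤ) : ℤ := ∑ v, D v

/-- A divisor has positive rank when, for any vertex `q`, the divisor minus one chip at `q`
is equivalent to an effective divisor. -/
def PositiveRank [Fintype V] (G : SimpleGraph V) (D : V → ℤ) : Prop :=
  ∀ q : V, ∃ D', Effective D' ∧ LinEquiv G (fun v => D v - if v = q then 1 else 0) D'

/-- The (divisorial) gonality of `G`: the minimum degree of an effective divisor of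
positive rank. -/
noncomputable def gonality [Fintype V] (G : SimpleGraph V) : ℕ :=
  sInf {d : ℕ | ∃ D : V → ℤ, Effective D ∧ degDiv D = d ∧ PositiveRank G D}

/-- The independence number of `G`: the maximum size of a set of pairwise
non-adjacent vertices. -/
noncomputable def indepNum [Fintype V] (G : SimpleGraph V) : ℕ :=
  sSup {k | ∃ S : Finset V, (∀ u ∈ S, ∀ v ∈ S, u ≠ v → ¬ G.Adj u v) ∧ S.card = k}

/-- The `ℓ`-th cone over `G`: add `ℓ` new vertices, each adjacent to every other vertex. -/
def cone (G : SimpleGraph V) (ℓ : ℕ) : SimpleGraph (V ⊕ Fin ℓ) :=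
  SimpleGraph.fromRel (fun x y => match x, y with
    | Sum.inl u, Sum.inl v => G.Adj u v
    | _, _ => True)

noncomputable def edgeScramble [Fintype V] (G : SimpleGraph V) : Finset (Finset V) :=
  Finset.univ.filter (fun E : Finset V => ∃ u v, G.Adj u v ∧ E = {u, v})

lemma crossing_eq_sum [Fintype V] (G : SimpleGraph V) (A : Finset V) :
    crossingEdges G A = ∑ v ∈ A, (G.neighborFinset v \ A).card := by
  classical
  unfold crossingEdges
  rw [Finset.card_eq_sum_card_fiberwise (f := Prod.fst) (t := A)
    (fun p hp => by simp only [Finset.mem_coe, Finset.mem_filter] at hp; exact hp.2.1)]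
  refine Finset.sum_congr rfl fun v hv => ?_
  have : (Finset.univ.filter (fun p : V × V => p.1 ∈ A ∧ p.2 ∉ A ∧ G.Adj p.1 p.2)).filter
      (fun p => p.1 = v) = {v} ×ˢ (G.neighborFinset v \ A) := by
    ext p
    simp only [Finset.mem_filter, Finset.mem_univ, true_and, Finset.mem_product,
      Finset.mem_singleton, Finset.mem_sdiff, SimpleGraph.mem_neighborFinset]
    constructor
    · rintro ⟨⟨h1, h2, h3⟩, rfl⟩; exact ⟨rfl, h3, h2⟩
    · rintro ⟨rfl, h3, h2⟩; exact ⟨⟨hv, h2, h3⟩, rfl⟩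
  rw [this, Finset.card_product, Finset.card_singleton, one_mul]

lemma crossing_symm [Fintype V] (G : SimpleGraph V) (A : Finset V) :
    crossingEdges G A = crossingEdges G Aᶜ := by
  classical
  unfold crossingEdges
  refine Finset.card_bij' (fun p _ => p.swap) (fun p _ => p.swap) ?_ ?_ ?_ ?_
  · intro p hp
    simp only [Finset.mem_filter, Finset.mem_univ, true_and, Finset.mem_compl] at hp ⊢
    exact ⟨hp.2.1, by simpa using hp.1, hp.2.2.symm⟩
  · intro p hp
    simp only [Finset.mem_filter, Finset.mem_univ, true_and, Finset.mem_compl] at hp ⊢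
    exact ⟨by simpa using hp.2.1, hp.1, hp.2.2.symm⟩
  · intro p _; rfl
  · intro p _; rfl

lemma crossing_lb [Fintype V] (G : SimpleGraph V) (A : Finset V) :
    (A.card : ℤ) * ((G.minDegree : ℤ) - A.card + 1) ≤ (crossingEdges G A : ℤ) := by
  classical
  rw [crossing_eq_sum]
  push_cast
  calc (A.card : ℤ) * ((G.minDegree : ℤ) - A.card + 1)
      = ∑ _v ∈ A, ((G.minDegree : ℤ) - A.card + 1) := by
        rw [Finset.sum_const, nsmul_eq_mul]
    _ ≤ ∑ v ∈ A, ((G.neighborFinset v \ A).card : ℤ) := by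
        refine Finset.sum_le_sum fun v hv => ?_
        have hsub : G.neighborFinset v ∩ A ⊆ A.erase v := by
          intro w hw
          simp only [Finset.mem_inter, SimpleGraph.mem_neighborFinset] at hw
          exact Finset.mem_erase.mpr ⟨fun h => G.irrefl (h ▸ hw.1), hw.2⟩
        have h1 : (G.neighborFinset v ∩ A).card ≤ A.card - 1 := by
          have := Finset.card_le_card hsub
          rwa [Finset.card_erase_of_mem hv] at this
        have h2 : (G.neighborFinset v ∩ A).card + (G.neighborFinset v \ A).card
            = (G.neighborFinset v).card := Finset.card_inter_add_card_sdiff _ _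
        have h3 : G.minDegree ≤ (G.neighborFinset v).card := by
          rw [SimpleGraph.card_neighborFinset_eq_degree]
          exact G.minDegree_le_degree v
        have h4 : 1 ≤ A.card := Finset.card_pos.mpr ⟨v, hv⟩
        omega

lemma quad_bound (n a d c : ℝ) (h2a : 2 ≤ a) (h2b : 2 ≤ n - a) (hd : n / 2 + 1 ≤ d)
    (h1 : a * (d - a + 1) ≤ c) (h2 : (n - a) * (d - (n - a) + 1) ≤ c) : n ≤ c := by
  rcases le_total a (n / 2) with h | h
  · nlinarith [mul_nonneg (by linarith : (0:ℝ) ≤ a - 2) (by linarith : (0:ℝ) ≤ n / 2 - a)]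
  · nlinarith [mul_nonneg (by linarith : (0:ℝ) ≤ (n - a) - 2)
      (by linarith : (0:ℝ) ≤ n / 2 - (n - a))]

theorem stmt7 [Fintype V] [Nonempty V] (G : SimpleGraph V)
    (hδ : ((Fintype.card V : ℝ)) / 2 + 1 ≤ (G.minDegree : ℝ)) :
    scrambleOrder G (edgeScramble G) = Fintype.card V - _root_.indepNum G := by
  classical
  set n := Fintype.card V with hn
  -- independence number facts
  set SI := {k | ∃ S : Finset V, (∀ u ∈ S, ∀ v ∈ S, u ≠ v → ¬ G.Adj u v) ∧ S.card = k} with hSI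
  have hSIne : SI.Nonempty := ⟨0, ∅, by simp⟩
  have hSIbdd : BddAbove SI := ⟨n, by rintro k ⟨S, _, rfl⟩; exact Finset.card_le_univ S⟩
  have hαmem : _root_.indepNum G ∈ SI := Nat.sSup_mem hSIne hSIbdd
  obtain ⟨T, hTind, hTcard⟩ := hαmem
  have hαle : ∀ S : Finset V, (∀ u ∈ S, ∀ v ∈ S, u ≠ v → ¬ G.Adj u v) →
      S.card ≤ _root_.indepNum G := fun S hS => le_csSup hSIbdd ⟨S, hS, rfl⟩
  have hαn : _root_.indepNum G ≤ n := hTcard ▸ Finset.card_le_univ T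
  -- hitting number facts
  have hHit : hitNum (edgeScramble G) = n - _root_.indepNum G := by
    have hmemTc : (n - _root_.indepNum G) ∈
        {k | ∃ C : Finset V, (∀ E ∈ edgeScramble G, (E ∩ C).Nonempty) ∧ C.card = k} := by
      refine ⟨Tᶜ, ?_, by rw [Finset.card_compl, hTcard]⟩
      intro E hE
      simp only [edgeScramble, Finset.mem_filter] at hE
      obtain ⟨-, u, v, huv, rfl⟩ := hE
      by_contra hcon
      rw [Finset.not_nonempty_iff_eq_empty] at hcon
      have hu : u ∈ T := by
        by_contra hu
        have : u ∈ ({u, v} : Finset V) ∩ Tᶜ := by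
          simp [Finset.mem_compl, hu]
        simp [hcon] at this
      have hv : v ∈ T := by
        by_contra hv
        have : v ∈ ({u, v} : Finset V) ∩ Tᶜ := by
          simp [Finset.mem_compl, hv]
        simp [hcon] at this
      exact hTind u hu v hv huv.ne huv
    have hle : hitNum (edgeScramble G) ≤ n - _root_.indepNum G := Nat.sInf_le hmemTc
    have hge : n - _root_.indepNum G ≤ hitNum (edgeScramble G) := by
      obtain ⟨C, hChit, hCcard⟩ := Nat.sInf_mem (⟨_, hmemTc⟩ :
        {k | ∃ C : Finset V, (∀ E ∈ edgeScramble G, (E ∩ C).Nonempty) ∧ C.card = k}.Nonempty)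
      have hCind : ∀ u ∈ Cᶜ, ∀ v ∈ Cᶜ, u ≠ v → ¬ G.Adj u v := by
        intro u hu v hv hne hadj
        have hE : ({u, v} : Finset V) ∈ edgeScramble G := by
          simp only [edgeScramble, Finset.mem_filter, Finset.mem_univ, true_and]
          exact ⟨u, v, hadj, rfl⟩
        obtain ⟨w, hw⟩ := hChit _ hE
        simp only [Finset.mem_inter, Finset.mem_insert, Finset.mem_singleton] at hw
        rcases hw.1 with rfl | rfl
        · exact (Finset.mem_compl.mp hu) hw.2
        · exact (Finset.mem_compl.mp hv) hw.2
      have h1 : Cᶜ.card ≤ _root_.indepNum G := hαle _ hCind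
      have h2 : Cᶜ.card = n - C.card := Finset.card_compl C
      have h3 : C.card ≤ n := Finset.card_le_univ C
      unfold hitNum
      omega
    omega
  -- cut number bound
  have hCut : ((n - _root_.indepNum G : ℕ) : ℕ∞) ≤ cutNum G (edgeScramble G) := by
    refine le_sInf ?_
    rintro k ⟨A, ⟨E1, hE1, hE1A⟩, ⟨E2, hE2, hE2A⟩, rfl⟩
    have hcard2 : ∀ E ∈ edgeScramble G, E.card = 2 := by
      intro E hE
      simp only [edgeScramble, Finset.mem_filter] at hE
      obtain ⟨-, u, v, huv, rfl⟩ := hE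
      rw [Finset.card_insert_of_notMem (by simp [huv.ne]), Finset.card_singleton]
    have h2a : 2 ≤ A.card := (hcard2 _ hE1) ▸ Finset.card_le_card hE1A
    have h2b : 2 ≤ Aᶜ.card := (hcard2 _ hE2) ▸ Finset.card_le_card hE2A
    have hAn : A.card ≤ n := Finset.card_le_univ A
    have hAc : (Aᶜ.card : ℤ) = (n : ℤ) - A.card := by
      rw [Finset.card_compl]; omega
    have hb1 := crossing_lb G A
    have hb2 := crossing_lb G Aᶜ
    rw [← crossing_symm] at hb2
    rw [hAc] at hb2
    have hreal : (n : ℝ) ≤ (crossingEdges G A : ℝ) := by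
      have hb1' : (A.card : ℝ) * ((G.minDegree : ℝ) - A.card + 1)
          ≤ (crossingEdges G A : ℝ) := by exact_mod_cast hb1
      have hb2' : ((n : ℝ) - A.card) * ((G.minDegree : ℝ) - ((n : ℝ) - A.card) + 1)
          ≤ (crossingEdges G A : ℝ) := by exact_mod_cast hb2
      have h2a' : (2 : ℝ) ≤ A.card := by exact_mod_cast h2a
      have h2b' : (2 : ℝ) ≤ (n : ℝ) - A.card := by
        have : (2 : ℤ) ≤ (n : ℤ) - A.card := by omega
        exact_mod_cast this
      exact quad_bound _ _ _ _ h2a' h2b' hδ hb1' hb2'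
    have hnat : n - _root_.indepNum G ≤ crossingEdges G A := by
      have : n ≤ crossingEdges G A := by exact_mod_cast hreal
      omega
    exact_mod_cast Nat.cast_le.mpr hnat
  -- conclude
  unfold scrambleOrder
  rw [hHit, min_eq_left hCut, ENat.toNat_coe]
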